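/- If h is a doubling dimension function with limsup_n N^n h(κ R_n) > 0, then 𝒫^h(C_{s,𝒟}) > 0. -/

import Mathlib

open scoped ENNReal NNReal

/-- The `δ`-packing pre-measure: supremum of `∑ h(2rᵢ)` over countable disjoint families
of open balls with centers in `E` and radii at most `δ` (balls of radius `0` are empty
and serve as padding). -/
noncomputable def packPreδ {X : Type*} [PseudoMetricSpace X] (h : ℝ → ℝ) (E : Set X)
    (δ : ℝ) : ℝ≥0∞ :=
  ⨆ (x : ℕ → X) (r : ℕ → ℝ) (_ : ∀ i, x i ∈ E) (_ : ∀ i, 0 ≤ r i ∧ r i ≤ δ)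
    (_ : Pairwise (Function.onFun Disjoint fun i => Metric.ball (x i) (r i))),
    ∑' i, ENNReal.ofReal (h (2 * r i))

/-- The `h`-packing pre-measure `𝒫^h₀(E) = lim_{δ→0} 𝒫^h_δ(E)`. -/
noncomputable def packPre {X : Type*} [PseudoMetricSpace X] (h : ℝ → ℝ) (E : Set X) : ℝ≥0∞ :=
  ⨅ (δ : ℝ) (_ : 0 < δ), packPreδ h E δ

/-- The `h`-packing measure `𝒫^h(E) = inf {∑ᵢ 𝒫^h₀(Eᵢ) : E ⊆ ⋃ᵢ Eᵢ}`. -/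
noncomputable def packMeasure {X : Type*} [PseudoMetricSpace X] (h : ℝ → ℝ) (E : Set X) : ℝ≥0∞ :=
  ⨅ (c : ℕ → Set X) (_ : E ⊆ ⋃ i, c i), ∑' i, packPre h (c i)

section PackAux

open MeasureTheory Metric Set Filter


noncomputable def digF (N : ℕ) (k : ℕ) (y : ℝ) : ℤ :=
  ⌊y * (N:ℝ)^(k+1)⌋ - N * ⌊y * (N:ℝ)^k⌋

lemma digF_nonneg {N : ℕ} {y : ℝ} (k : ℕ) : 0 ≤ digF N k y := by
  have hN : (0:ℝ) ≤ N := Nat.cast_nonneg N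
  have hfl := Int.floor_le (y * (N:ℝ)^k)
  have h2 : (N:ℤ) * ⌊y*(N:ℝ)^k⌋ ≤ ⌊y * (N:ℝ)^(k+1)⌋ := by
    apply Int.le_floor.2
    rw [pow_succ]
    push_cast
    nlinarith
  simp only [digF]; omega

lemma digF_lt {N : ℕ} (hN : 0 < N) {y : ℝ} (k : ℕ) : digF N k y < N := by
  have hNR : (0:ℝ) < N := by exact_mod_cast hN
  have hfl := Int.lt_floor_add_one (y * (N:ℝ)^k)
  have h2 : ⌊y * (N:ℝ)^(k+1)⌋ < (N:ℤ) * ⌊y*(N:ℝ)^k⌋ + N := by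
    apply Int.floor_lt.2
    rw [pow_succ]
    push_cast
    nlinarith
  simp only [digF]; omega

lemma digF_floor_sum {N : ℕ} (hN : 0 < N) {y : ℝ} (hy : y ∈ Set.Ico (0:ℝ) 1) (n : ℕ) :
    ((⌊y * (N:ℝ)^n⌋ : ℝ)) / (N:ℝ)^n
      = ∑ k ∈ Finset.range n, (digF N k y : ℝ) / (N:ℝ)^(k+1) := by
  have hNR : (0:ℝ) < (N:ℝ) := by exact_mod_cast hN
  induction n with
  | zero =>
    simp only [pow_zero, mul_one, Finset.range_zero, Finset.sum_empty]
    rw [Int.floor_eq_zero_iff.2 (by exact ⟨hy.1, hy.2⟩)]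
    simp
  | succ n ih =>
    rw [Finset.sum_range_succ, ← ih]
    have hpow : (N:ℝ)^(n+1) ≠ 0 := by positivity
    have hpow' : (N:ℝ)^n ≠ 0 := by positivity
    simp only [digF]
    push_cast
    field_simp
    ring

lemma digF_mem_Ico {N : ℕ} (hN : 0 < N) {y : ℝ} (hy : y ∈ Set.Ico (0:ℝ) 1) (n : ℕ) :
    y ∈ Set.Ico (∑ k ∈ Finset.range n, (digF N k y : ℝ) / (N:ℝ)^(k+1))
      ((∑ k ∈ Finset.range n, (digF N k y : ℝ) / (N:ℝ)^(k+1)) + ((N:ℝ)^n)⁻¹) := by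
  have hNR : (0:ℝ) < (N:ℝ)^n := by
    have : (0:ℝ) < (N:ℝ) := by exact_mod_cast hN
    positivity
  rw [← digF_floor_sum hN hy n]
  constructor
  · rw [div_le_iff₀ hNR]
    exact Int.floor_le _
  · have h1 : y * (N:ℝ)^n < ⌊y * (N:ℝ)^n⌋ + 1 := Int.lt_floor_add_one _
    have : y = y * (N:ℝ)^n / (N:ℝ)^n := by field_simp
    nth_rewrite 1 [this]
    have h2 : ((⌊y * (N:ℝ)^n⌋:ℝ)) / (N:ℝ)^n + ((N:ℝ)^n)⁻¹
        = ((⌊y * (N:ℝ)^n⌋:ℝ) + 1) / (N:ℝ)^n := by field_simp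
    rw [h2, div_lt_div_iff_of_pos_right]
    · exact h1
    · exact hNR

lemma packPreδ_mono {X : Type*} [PseudoMetricSpace X] (h : ℝ → ℝ) {E F : Set X}
    (hEF : E ⊆ F) (δ : ℝ) : packPreδ h E δ ≤ packPreδ h F δ := by
  refine iSup_mono fun x => iSup_mono fun r => ?_
  refine iSup_le fun hx => le_iSup_of_le (fun i => hEF (hx i)) le_rfl

lemma packPre_mono {X : Type*} [PseudoMetricSpace X] (h : ℝ → ℝ) {E F : Set X}
    (hEF : E ⊆ F) : packPre h E ≤ packPre h F :=
  iInf_mono fun δ => iInf_mono fun _ => packPreδ_mono h hEF δ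

/-- A finite disjoint family of closed balls centered in `E` with radii in `(0, δ]` gives a
lower bound for `packPreδ`. -/
lemma finset_le_packPreδ {X : Type*} [PseudoMetricSpace X] (h : ℝ → ℝ) (h0 : h 0 = 0)
    (E : Set X) (δ : ℝ) (x₀ : X) (hx₀ : x₀ ∈ E)
    (t : Set X) (r : X → ℝ) (tE : t ⊆ E) (hr : ∀ x ∈ t, 0 < r x ∧ r x ≤ δ)
    (hdisj : t.PairwiseDisjoint fun x => Metric.closedBall x (r x))
    (F : Finset X) (hF : ↑F ⊆ t) :
    ∑ x ∈ F, ENNReal.ofReal (h (2 * r x)) ≤ packPreδ h E δ := by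
  rcases F.eq_empty_or_nonempty with rfl | ⟨z, hz⟩
  · simp
  have hδ : 0 < δ := lt_of_lt_of_le (hr z (hF hz)).1 (hr z (hF hz)).2
  classical
  let e : F ≃ Fin F.card := F.equivFin
  let c : ℕ → X := fun i => if hi : i < F.card then (e.symm ⟨i, hi⟩ : X) else x₀
  let ρ : ℕ → ℝ := fun i => if hi : i < F.card then r (e.symm ⟨i, hi⟩ : X) else 0
  have hmemF : ∀ (i : ℕ) (hi : i < F.card), ((e.symm ⟨i, hi⟩ : F) : X) ∈ t := fun i hi =>
    hF (e.symm ⟨i, hi⟩).2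
  have hc : ∀ i, c i ∈ E := by
    intro i; simp only [c]
    split
    · next hi => exact tE (hmemF i hi)
    · exact hx₀
  have hρ : ∀ i, 0 ≤ ρ i ∧ ρ i ≤ δ := by
    intro i; simp only [ρ]
    split
    · next hi => exact ⟨(hr _ (hmemF i hi)).1.le, (hr _ (hmemF i hi)).2⟩
    · exact ⟨le_rfl, hδ.le⟩
  have hdis : Pairwise (Function.onFun Disjoint fun i => Metric.ball (c i) (ρ i)) := by
    intro i j hij
    simp only [Function.onFun, c, ρ]
    by_cases hi : i < F.card
    · by_cases hj : j < F.card
      · simp only [dif_pos hi, dif_pos hj]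
        have hne : ((e.symm ⟨i, hi⟩ : F) : X) ≠ ((e.symm ⟨j, hj⟩ : F) : X) := by
          intro hxy
          apply hij
          have : (e.symm ⟨i, hi⟩ : F) = (e.symm ⟨j, hj⟩ : F) := Subtype.ext hxy
          have := e.symm.injective this
          simpa using congrArg Fin.val (by exact_mod_cast this)
        exact Disjoint.mono Metric.ball_subset_closedBall Metric.ball_subset_closedBall
          (hdisj (hmemF i hi) (hmemF j hj) hne)
      · simp only [dif_neg hj, Metric.ball_zero]
        exact disjoint_bot_right
    · simp only [dif_neg hi, Metric.ball_zero]
      exact disjoint_bot_left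
  have hsum : ∑ x ∈ F, ENNReal.ofReal (h (2 * r x)) = ∑' i, ENNReal.ofReal (h (2 * ρ i)) := by
    have h1 : ∑' i, ENNReal.ofReal (h (2 * ρ i))
        = ∑ i ∈ Finset.range F.card, ENNReal.ofReal (h (2 * ρ i)) := by
      refine tsum_eq_sum ?_
      intro i hi
      simp only [Finset.mem_range, not_lt] at hi
      simp only [ρ, dif_neg (not_lt.2 hi), mul_zero, h0, ENNReal.ofReal_zero]
    have h3 : ∑ i : Fin F.card, ENNReal.ofReal (h (2 * ρ i))
        = ∑ x : F, ENNReal.ofReal (h (2 * r (x : X))) := by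
      rw [← e.symm.sum_comp (fun x : F => ENNReal.ofReal (h (2 * r (x : X))))]
      exact Finset.sum_congr rfl fun i _ => by simp only [ρ, dif_pos i.2]
    rw [h1, ← Fin.sum_univ_eq_sum_range (fun i => ENNReal.ofReal (h (2 * ρ i))) F.card, h3,
      Finset.sum_coe_sort F (fun x => ENNReal.ofReal (h (2 * r x)))]
  rw [hsum]
  apply le_iSup_of_le c
  apply le_iSup_of_le ρ
  apply le_iSup_of_le hc
  apply le_iSup_of_le hρ
  exact le_iSup_of_le hdis le_rfl

/-- Density lower bound for the packing pre-measure via the Besicovitch covering theorem. -/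
lemma measure_le_packPre {p : ℕ} (μ : Measure (EuclideanSpace ℝ (Fin p))) [SFinite μ]
    (h : ℝ → ℝ) (h0 : h 0 = 0) (Λ : ℝ≥0∞) (hΛ0 : Λ ≠ 0) (hΛtop : Λ ≠ ⊤)
    (E : Set (EuclideanSpace ℝ (Fin p)))
    (hd : ∀ x ∈ E, ∀ δ : ℝ, 0 < δ → ∃ r : ℝ, 0 < r ∧ r < δ ∧
      μ (Metric.closedBall x r) ≤ Λ * ENNReal.ofReal (h (2 * r))) :
    μ E ≤ Λ * packPre h E := by
  rcases E.eq_empty_or_nonempty with rfl | ⟨x₀, hx₀⟩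
  · simp
  have key : ∀ δ : ℝ, 0 < δ → μ E ≤ Λ * packPreδ h E δ := by
    intro δ hδ
    set f : EuclideanSpace ℝ (Fin p) → Set ℝ := fun x =>
      {ρ | 0 < ρ ∧ μ (Metric.closedBall x ρ) ≤ Λ * ENNReal.ofReal (h (2 * ρ))} with hf_def
    have hf : ∀ x ∈ E, ∀ ε : ℝ, ε > 0 → (f x ∩ Set.Ioo 0 ε).Nonempty := by
      intro x hx ε hε
      obtain ⟨r, hr0, hrε, hrμ⟩ := hd x hx ε hε
      exact ⟨r, ⟨hr0, hrμ⟩, hr0, hrε⟩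
    obtain ⟨t, r, tcount, tE, hrt, hcov, hdisj⟩ :=
      Besicovitch.exists_disjoint_closedBall_covering_ae μ f E hf (fun _ => δ) (fun x _ => hδ)
    have hEU : μ E ≤ μ (⋃ x ∈ t, Metric.closedBall x (r x)) := by
      have hsub : E ⊆ (E \ ⋃ x ∈ t, Metric.closedBall x (r x)) ∪
          (⋃ x ∈ t, Metric.closedBall x (r x)) := by
        intro y hy
        by_cases hyU : y ∈ ⋃ x ∈ t, Metric.closedBall x (r x)
        · exact Or.inr hyU
        · exact Or.inl ⟨hy, hyU⟩
      calc μ E ≤ μ ((E \ ⋃ x ∈ t, Metric.closedBall x (r x)) ∪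
          (⋃ x ∈ t, Metric.closedBall x (r x))) := measure_mono hsub
        _ ≤ μ (E \ ⋃ x ∈ t, Metric.closedBall x (r x)) +
            μ (⋃ x ∈ t, Metric.closedBall x (r x)) := measure_union_le _ _
        _ = μ (⋃ x ∈ t, Metric.closedBall x (r x)) := by rw [hcov, zero_add]
    refine hEU.trans ?_
    refine (measure_biUnion_le μ tcount _).trans ?_
    rw [ENNReal.tsum_eq_iSup_sum]
    refine iSup_le fun G => ?_
    have hstep : ∀ x ∈ G, μ (Metric.closedBall (x : EuclideanSpace ℝ (Fin p)) (r x))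
        ≤ Λ * ENNReal.ofReal (h (2 * r (x : EuclideanSpace ℝ (Fin p)))) := by
      intro x _
      exact (hrt _ x.2).1.2
    calc ∑ x ∈ G, μ (Metric.closedBall (x : EuclideanSpace ℝ (Fin p)) (r x))
        ≤ ∑ x ∈ G, Λ * ENNReal.ofReal (h (2 * r (x : EuclideanSpace ℝ (Fin p)))) :=
          Finset.sum_le_sum hstep
      _ = Λ * ∑ x ∈ G, ENNReal.ofReal (h (2 * r (x : EuclideanSpace ℝ (Fin p)))) := by
          rw [Finset.mul_sum]
      _ ≤ Λ * packPreδ h E δ := by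
          gcongr
          classical
          have hinj : ∀ a ∈ G, ∀ b ∈ G, (a : EuclideanSpace ℝ (Fin p)) = b → a = b :=
            fun a _ b _ hab => Subtype.ext hab
          have key2 := finset_le_packPreδ h h0 E δ x₀ hx₀ t r tE
            (fun x hx => ⟨(hrt x hx).2.1, (hrt x hx).2.2.le⟩) hdisj
            (G.image (fun x : t => (x : EuclideanSpace ℝ (Fin p))))
            (by intro y hy
                simp only [Finset.coe_image, Set.mem_image] at hy
                obtain ⟨z, _, rfl⟩ := hy
                exact z.2)
          rw [Finset.sum_image hinj] at key2
          exact key2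
  have : μ E ≤ ⨅ (δ : ℝ) (_ : 0 < δ), Λ * packPreδ h E δ := by
    exact le_iInf fun δ => le_iInf fun hδ => key δ hδ
  refine this.trans (le_of_eq ?_)
  rw [packPre, ENNReal.mul_iInf_of_ne hΛ0 hΛtop]
  refine iInf_congr fun δ => ?_
  rw [ENNReal.mul_iInf_of_ne hΛ0 hΛtop]

lemma iter_dbl (h : ℝ → ℝ) (c : ℝ) (hc : 1 ≤ c)
    (hdbl : ∀ x > 0, h (2 * x) ≤ c * h x) :
    ∀ (m : ℕ) (x : ℝ), 0 < x → h (2 ^ m * x) ≤ c ^ m * h x := by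
  intro m
  induction m with
  | zero => intro x hx; simp
  | succ m ih =>
    intro x hx
    have h1 : (2:ℝ) ^ (m + 1) * x = 2 * (2 ^ m * x) := by ring
    have h2 : (0:ℝ) < 2 ^ m * x := by positivity
    calc h (2 ^ (m+1) * x) = h (2 * (2 ^ m * x)) := by rw [h1]
      _ ≤ c * h (2 ^ m * x) := hdbl _ h2
      _ ≤ c * (c ^ m * h x) := by
          have := ih x hx
          nlinarith
      _ = c ^ (m+1) * h x := by ring


end PackAux

set_option maxHeartbeats 1000000 in
/-- If `h` is a doubling dimension function with `limsup_n N^n h(κRₙ) > 0`,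
then `𝒫^h(C_{s,𝒟}) > 0`.  Here `Rₙ = ∑_{i ≥ n} sᵢ` is the tail of the series after the
first `n` terms. -/
theorem stmt_9 (p N : ℕ) (hN : 2 ≤ N)
    (s : ℕ → ℝ) (hs : ∀ n, 0 < s n) (hsum : Summable s)
    (d : ℕ → Fin N → EuclideanSpace ℝ (Fin p))
    (hzero : ∀ n, d n ⟨0, by omega⟩ = 0)
    (κ τ : ℝ) (hτ : 0 < τ)
    (hκ : ∀ (n : ℕ) (i j : Fin N), i ≠ j → ‖d n i - d n j‖ ≤ κ)
    (hτd : ∀ (n : ℕ) (i j : Fin N), i ≠ j → τ ≤ ‖d n i - d n j‖)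
    (R : ℕ → ℝ) (hR : ∀ n, R n = ∑' i, s (n + i))
    (M : ℝ) (hM : M < 1) (hsep : ∀ n, κ * R (n + 1) ≤ M * (τ * s n))
    (h : ℝ → ℝ) (hcont : Continuous h) (hmono : Monotone h) (h0 : h 0 = 0)
    (hnonneg : ∀ x, 0 ≤ h x)
    (c : ℝ) (hdbl : ∀ x > 0, h (2 * x) ≤ c * h x)
    (hpos : 0 < Filter.atTop.limsup
      (fun n => (N : ℝ≥0∞) ^ n * ENNReal.ofReal (h (κ * R n)))) :
    0 < packMeasure h (Set.range fun σ : ℕ → Fin N => ∑' i, s i • d i (σ i)) := by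
  classical
  have hNpos : 0 < N := by omega
  have h01 : (⟨0, by omega⟩ : Fin N) ≠ ⟨1, by omega⟩ := by simp [Fin.ext_iff]
  have hτκ : τ ≤ κ := le_trans (hτd 0 _ _ h01) (hκ 0 _ _ h01)
  have hκpos : 0 < κ := lt_of_lt_of_le hτ hτκ
  have hdb : ∀ (n : ℕ) (j : Fin N), ‖d n j‖ ≤ κ := by
    intro n j
    by_cases hj : j = ⟨0, by omega⟩
    · rw [hj, hzero]; simpa using hκpos.le
    · have := hκ n j ⟨0, by omega⟩ hj
      rwa [hzero, sub_zero] at this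
  set π : (ℕ → Fin N) → EuclideanSpace ℝ (Fin p) := fun σ => ∑' i, s i • d i (σ i) with hπ
  have hnormb : ∀ (σ : ℕ → Fin N) (i : ℕ), ‖s i • d i (σ i)‖ ≤ κ * s i := by
    intro σ i
    rw [norm_smul, Real.norm_eq_abs, abs_of_pos (hs i), mul_comm]
    exact mul_le_mul_of_nonneg_right (hdb i _) (hs i).le
  have hsumm : ∀ σ : ℕ → Fin N, Summable fun i => s i • d i (σ i) := fun σ =>
    Summable.of_norm_bounded (hsum.mul_left κ) (hnormb σ)
  -- R facts
  have hsn : ∀ n, Summable (fun i => s (n + i)) := by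
    intro n
    exact ((summable_nat_add_iff n).2 hsum).congr (fun i => by rw [add_comm])
  have hRsucc : ∀ n, R n = s n + R (n + 1) := by
    intro n
    rw [hR n, hR (n+1), Summable.tsum_eq_zero_add (hsn n), add_zero]
    congr 1
    exact tsum_congr fun i => congrArg s (by omega)
  have hRnonneg : ∀ n, 0 ≤ R n := by
    intro n; rw [hR]
    exact tsum_nonneg fun i => (hs _).le
  have hRpos : ∀ n, 0 < R n := by
    intro n
    rw [hRsucc n]
    have := hRnonneg (n+1)
    have := hs n
    linarith
  have hRanti : Antitone R := by
    apply antitone_nat_of_succ_le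
    intro n
    rw [hRsucc n]
    have := hs n
    linarith
  have hRtend : Filter.Tendsto R Filter.atTop (nhds 0) := by
    have hkey : ∀ n, ∑ i ∈ Finset.range n, s i + R n = ∑' i, s i := by
      intro n
      rw [hR n]
      rw [show (∑' i, s (n + i)) = ∑' i, s (i + n) from tsum_congr fun i => congrArg s (by omega)]
      exact Summable.sum_add_tsum_nat_add n hsum
    have h1 : Filter.Tendsto (fun n => (∑' i, s i) - ∑ i ∈ Finset.range n, s i)
        Filter.atTop (nhds ((∑' i, s i) - ∑' i, s i)) :=
      tendsto_const_nhds.sub hsum.hasSum.tendsto_sum_nat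
    rw [sub_self] at h1
    exact h1.congr fun n => by have := hkey n; linarith
  have hM0 : 0 < M := by
    nlinarith [hsep 0, mul_pos hκpos (hRpos 1), mul_pos hτ (hs 0)]
  -- separation
  have hsepπ : ∀ (σ σ' : ℕ → Fin N) (n : ℕ), (∀ j < n, σ j = σ' j) → σ n ≠ σ' n →
      τ * s n - κ * R (n + 1) ≤ ‖π σ - π σ'‖ := by
    intro σ σ' n hagree hdiff
    set g : ℕ → EuclideanSpace ℝ (Fin p) := fun i => s i • d i (σ i) - s i • d i (σ' i) with hg
    have hgsum : Summable g := (hsumm σ).sub (hsumm σ')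
    have hgnorm : ∀ j, ‖g j‖ ≤ κ * s j := by
      intro j
      by_cases hj : σ j = σ' j
      · have hz : g j = 0 := by simp [hg, hj]
        rw [hz, norm_zero]
        exact mul_nonneg hκpos.le (hs j).le
      · rw [hg]
        simp only [← smul_sub, norm_smul, Real.norm_eq_abs, abs_of_pos (hs j)]
        rw [mul_comm (s j)]
        exact mul_le_mul_of_nonneg_right (hκ j _ _ hj) (hs j).le
    have hππ : π σ - π σ' = ∑' i, g i := (Summable.tsum_sub (hsumm σ) (hsumm σ')).symm
    have h1 : ∑' i, g i = ∑' i, g (i + n) := by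
      rw [← Summable.sum_add_tsum_nat_add n hgsum, Finset.sum_eq_zero, zero_add]
      intro i hi
      rw [hg]
      simp only
      rw [hagree i (Finset.mem_range.1 hi), sub_self]
    have hs2 : Summable fun i => g (i + n) := (summable_nat_add_iff n).2 hgsum
    have h2 : ∑' i, g (i + n) = g n + ∑' i, g (i + 1 + n) := by
      rw [Summable.tsum_eq_zero_add hs2, zero_add]
    have hsum3 : Summable fun i => ‖g (i + 1 + n)‖ := by
      apply Summable.of_nonneg_of_le (fun i => norm_nonneg _) (fun i => hgnorm (i + 1 + n))
      exact (((summable_nat_add_iff (1 + n)).2 (hsum.mul_left κ)).congr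
        (fun i => by rw [show i + (1 + n) = i + 1 + n by omega]))
    have hTnorm : ‖∑' i, g (i + 1 + n)‖ ≤ κ * R (n + 1) := by
      calc ‖∑' i, g (i + 1 + n)‖ ≤ ∑' i, ‖g (i + 1 + n)‖ := norm_tsum_le_tsum_norm hsum3
        _ ≤ ∑' i, κ * s (n + 1 + i) := by
            apply Summable.tsum_le_tsum _ hsum3
            · exact ((hsn (n+1)).mul_left κ).congr (fun i => by rw [show n + 1 + i = n + (1 + i) by omega])
            · intro i
              calc ‖g (i + 1 + n)‖ ≤ κ * s (i + 1 + n) := hgnorm _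
                _ = κ * s (n + 1 + i) := by rw [show i + 1 + n = n + 1 + i by omega]
        _ = κ * R (n + 1) := by
            rw [hR (n+1), tsum_mul_left]
    have hgn : τ * s n ≤ ‖g n‖ := by
      rw [hg]
      simp only [← smul_sub, norm_smul, Real.norm_eq_abs, abs_of_pos (hs n), mul_comm (s n)]
      exact mul_le_mul_of_nonneg_right (hτd n _ _ hdiff) (hs n).le
    have h4 : ‖g n‖ - ‖∑' i, g (i + 1 + n)‖ ≤ ‖g n + ∑' i, g (i + 1 + n)‖ := by
      have h5 := norm_add_le (g n + ∑' i, g (i + 1 + n)) (-(∑' i, g (i + 1 + n)))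
      simp only [add_neg_cancel_right, norm_neg] at h5
      linarith
    rw [hππ, h1, h2]
    linarith
  -- continuity of π and compactness of C
  have hπcont : Continuous π := by
    apply continuous_tsum
    · intro i
      show Continuous ((fun j : Fin N => s i • d i j) ∘ (fun σ : ℕ → Fin N => σ i))
      exact continuous_of_discreteTopology.comp (continuous_apply i)
    · exact hsum.mul_left κ
    · intro i σ
      exact hnormb σ i
  have hCmeas : MeasurableSet (Set.range π) := (isCompact_range hπcont).isClosed.measurableSet
  -- digits
  set dgt : ℝ → ℕ → Fin N := fun y k => ⟨(digF N k y).toNat % N, Nat.mod_lt _ hNpos⟩ with hdgt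
  have hdgtval : ∀ (y : ℝ) (k : ℕ), ((dgt y k : ℕ) : ℤ) = digF N k y := by
    intro y k
    have h1 := digF_nonneg (N := N) (y := y) k
    have h2 := digF_lt hNpos (y := y) k
    have h3 : (dgt y k : ℕ) = (digF N k y).toNat % N := rfl
    have h4 : (digF N k y).toNat < N := by omega
    rw [h3, Nat.mod_eq_of_lt h4]
    omega
  have hdgtmeas : Measurable dgt := by
    apply measurable_pi_lambda
    intro k
    have m1 : Measurable fun y : ℝ => ((⌊y * (N:ℝ)^(k+1)⌋, ⌊y * (N:ℝ)^k⌋) : ℤ × ℤ) :=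
      Measurable.prod (Measurable.floor (measurable_id.mul_const _))
        (Measurable.floor (measurable_id.mul_const _))
    have hg2 : Measurable (fun q : ℤ × ℤ => (⟨(q.1 - N * q.2).toNat % N, Nat.mod_lt _ hNpos⟩ : Fin N)) :=
      measurable_to_countable' fun v => (Set.to_countable _).measurableSet
    exact hg2.comp m1
  set f : ℝ → EuclideanSpace ℝ (Fin p) := fun y => π (dgt y) with hfdef
  have hfmeas : Measurable f := hπcont.measurable.comp hdgtmeas
  set μ : MeasureTheory.Measure (EuclideanSpace ℝ (Fin p)) :=
    MeasureTheory.Measure.map f (MeasureTheory.volume.restrict (Set.Ico (0:ℝ) 1)) with hμdef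
  have hμuniv : μ Set.univ = 1 := by
    rw [hμdef, MeasureTheory.Measure.map_apply hfmeas MeasurableSet.univ]
    simp [Real.volume_Ico]
  haveI : MeasureTheory.IsProbabilityMeasure μ := ⟨hμuniv⟩
  have hμC : μ (Set.range π) = 1 := by
    rw [hμdef, MeasureTheory.Measure.map_apply hfmeas hCmeas]
    rw [show f ⁻¹' (Set.range π) = Set.univ from Set.eq_univ_of_forall (fun y => ⟨dgt y, rfl⟩)]
    simp [Real.volume_Ico]
  -- the key ball estimate
  set γ : ℝ := (1 - M) * τ with hγdef
  have hγpos : 0 < γ := mul_pos (by linarith) hτ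
  have hball : ∀ (σ : ℕ → Fin N) (n : ℕ) (ρ : ℝ), 0 < ρ → ρ < γ * R n →
      μ (Metric.closedBall (π σ) ρ) ≤ ((N : ℝ≥0∞) ^ n)⁻¹ := by
    intro σ n ρ hρ0 hργ
    rw [hμdef, MeasureTheory.Measure.map_apply hfmeas measurableSet_closedBall,
      MeasureTheory.Measure.restrict_apply (hfmeas measurableSet_closedBall)]
    set a : ℝ := ∑ k ∈ Finset.range n, ((σ k : ℕ) : ℝ) / (N:ℝ)^(k+1) with ha
    have hsub : f ⁻¹' (Metric.closedBall (π σ) ρ) ∩ Set.Ico (0:ℝ) 1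
        ⊆ Set.Ico a (a + ((N:ℝ)^n)⁻¹) := by
      rintro y ⟨hyb, hy01⟩
      have hagree : ∀ k < n, dgt y k = σ k := by
        by_contra hcon
        push_neg at hcon
        obtain ⟨k, hkn, hkneq⟩ := hcon
        have hex : ∃ j, dgt y j ≠ σ j := ⟨k, hkneq⟩
        have hk₀spec : dgt y (Nat.find hex) ≠ σ (Nat.find hex) := Nat.find_spec hex
        have hk₀min : ∀ j < Nat.find hex, dgt y j = σ j := fun j hj =>
          not_not.1 (Nat.find_min hex hj)
        have hk₀n : Nat.find hex < n := lt_of_le_of_lt (Nat.find_le hkneq) hkn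
        set k₀ := Nat.find hex
        have hlow := hsepπ (dgt y) σ k₀ hk₀min hk₀spec
        have hdist : ‖π (dgt y) - π σ‖ ≤ ρ := by
          have hmem := Metric.mem_closedBall.1 hyb
          rwa [dist_eq_norm] at hmem
        have h3 : R n ≤ R (k₀ + 1) := hRanti (by omega)
        have hR1 : R (k₀ + 1) ≤ M * s k₀ := by
          have h2' : τ * R (k₀+1) ≤ κ * R (k₀+1) :=
            mul_le_mul_of_nonneg_right hτκ (hRpos _).le
          nlinarith [hsep k₀, hτ]
        have e1 : γ * R n ≤ γ * (M * s k₀) :=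
          mul_le_mul_of_nonneg_left (h3.trans hR1) hγpos.le
        have e2 : γ * (M * s k₀) ≤ γ * s k₀ := by
          have hMs : M * s k₀ ≤ s k₀ := by nlinarith [hs k₀]
          exact mul_le_mul_of_nonneg_left hMs hγpos.le
        have e3 : γ * s k₀ ≤ τ * s k₀ - κ * R (k₀ + 1) := by
          rw [hγdef]
          nlinarith [hsep k₀]
        linarith
      have hmem := digF_mem_Ico hNpos hy01 n
      have haeq : (∑ k ∈ Finset.range n, (digF N k y : ℝ) / (N:ℝ)^(k+1)) = a := by
        rw [ha]
        refine Finset.sum_congr rfl fun k hk => ?_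
        have h5 : ((σ k : ℕ) : ℤ) = digF N k y := by
          rw [← hagree k (Finset.mem_range.1 hk)]
          exact hdgtval y k
        rw [← h5]
        push_cast
        ring
      rwa [haeq] at hmem
    calc MeasureTheory.volume (f ⁻¹' Metric.closedBall (π σ) ρ ∩ Set.Ico 0 1)
        ≤ MeasureTheory.volume (Set.Ico a (a + ((N:ℝ)^n)⁻¹)) := MeasureTheory.measure_mono hsub
      _ = ((N : ℝ≥0∞) ^ n)⁻¹ := by
          rw [Real.volume_Ico]
          rw [show a + ((N:ℝ)^n)⁻¹ - a = ((N:ℝ)^n)⁻¹ by ring]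
          rw [ENNReal.ofReal_inv_of_pos (by positivity), ENNReal.ofReal_pow (by positivity)]
          norm_num
  -- doubling constant at least 1
  have hx0pos : ∃ x, 0 < x ∧ 0 < h x := by
    by_contra hcon
    push_neg at hcon
    have hzero' : ∀ n : ℕ, ENNReal.ofReal (h (κ * R n)) = 0 := by
      intro n
      have h1 := hcon (κ * R n) (mul_pos hκpos (hRpos n))
      have h2 := hnonneg (κ * R n)
      rw [ENNReal.ofReal_eq_zero]
      linarith
    rw [show (fun n => (N : ℝ≥0∞) ^ n * ENNReal.ofReal (h (κ * R n))) = fun _ => (0:ℝ≥0∞) from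
      funext fun n => by rw [hzero', mul_zero]] at hpos
    simp at hpos
  have hc1 : 1 ≤ c := by
    obtain ⟨x₀', hx₀'pos, hhx₀'⟩ := hx0pos
    have hd1 := hdbl x₀' hx₀'pos
    have hm1 := hmono (by linarith : x₀' ≤ 2 * x₀')
    nlinarith
  have hiter := iter_dbl h c hc1 hdbl
  obtain ⟨m, hm⟩ : ∃ m : ℕ, κ / γ < 2 ^ m := pow_unbounded_of_one_lt _ one_lt_two
  have hκ2m : κ ≤ 2 ^ m * γ := by
    rw [div_lt_iff₀ hγpos] at hm
    linarith
  obtain ⟨ε, hε0, hεL⟩ := exists_between hpos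
  have hεtop : ε ≠ ⊤ := ne_top_of_lt hεL
  have hfreq : ∃ᶠ n in Filter.atTop,
      ε < (N : ℝ≥0∞) ^ n * ENNReal.ofReal (h (κ * R n)) :=
    Filter.frequently_lt_of_lt_limsup (by isBoundedDefault) hεL
  set Λ : ℝ≥0∞ := ε⁻¹ * ENNReal.ofReal (c ^ m) with hΛdef
  have hcm1 : (1:ℝ) ≤ c ^ m := one_le_pow₀ hc1
  have hΛ0 : Λ ≠ 0 := by
    rw [hΛdef]
    apply mul_ne_zero
    · exact ENNReal.inv_ne_zero.2 hεtop
    · intro hz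
      rw [ENNReal.ofReal_eq_zero] at hz
      linarith
  have hΛtop : Λ ≠ ⊤ :=
    ENNReal.mul_ne_top (ENNReal.inv_ne_top.2 hε0.ne') ENNReal.ofReal_ne_top
  -- density estimate at every point of C
  have hdens : ∀ x ∈ Set.range π, ∀ δ : ℝ, 0 < δ → ∃ ρ : ℝ, 0 < ρ ∧ ρ < δ ∧
      μ (Metric.closedBall x ρ) ≤ Λ * ENNReal.ofReal (h (2 * ρ)) := by
    rintro x ⟨σ, rfl⟩ δ hδ
    have hev : ∀ᶠ n in Filter.atTop, γ * R n < δ := by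
      have ht : Filter.Tendsto (fun n => γ * R n) Filter.atTop (nhds (γ * 0)) :=
        hRtend.const_mul γ
      rw [mul_zero] at ht
      exact ht.eventually_lt_const hδ
    obtain ⟨n, hn1, hn2⟩ := (hfreq.and_eventually hev).exists
    refine ⟨γ * R n / 2, half_pos (mul_pos hγpos (hRpos n)),
      by linarith [mul_pos hγpos (hRpos n)], ?_⟩
    have hb := hball σ n (γ * R n / 2) (half_pos (mul_pos hγpos (hRpos n)))
      (by nlinarith [mul_pos hγpos (hRpos n)])
    refine hb.trans ?_
    rw [show 2 * (γ * R n / 2) = γ * R n by ring]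
    have hreal : h (κ * R n) ≤ c ^ m * h (γ * R n) := by
      have h1 : κ * R n ≤ 2 ^ m * (γ * R n) := by nlinarith [hRpos n]
      calc h (κ * R n) ≤ h (2 ^ m * (γ * R n)) := hmono h1
        _ ≤ c ^ m * h (γ * R n) := hiter m _ (mul_pos hγpos (hRpos n))
    have hNn0 : ((N : ℝ≥0∞) ^ n) ≠ 0 :=
      pow_ne_zero _ ((Nat.cast_ne_zero (R := ℝ≥0∞)).2 (by omega))
    have hNntop : ((N : ℝ≥0∞) ^ n) ≠ ⊤ := ENNReal.pow_ne_top (ENNReal.natCast_ne_top N)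
    have hA : ε * ((N : ℝ≥0∞) ^ n)⁻¹ ≤ ENNReal.ofReal (h (κ * R n)) := by
      calc ε * ((N : ℝ≥0∞) ^ n)⁻¹
          ≤ ((N : ℝ≥0∞) ^ n * ENNReal.ofReal (h (κ * R n))) * ((N : ℝ≥0∞) ^ n)⁻¹ :=
            mul_le_mul_left hn1.le _
        _ = ENNReal.ofReal (h (κ * R n)) * ((N : ℝ≥0∞) ^ n * ((N : ℝ≥0∞) ^ n)⁻¹) := by ring
        _ = ENNReal.ofReal (h (κ * R n)) := by
            rw [ENNReal.mul_inv_cancel hNn0 hNntop, mul_one]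
    have hB : ((N : ℝ≥0∞) ^ n)⁻¹ ≤ ε⁻¹ * ENNReal.ofReal (h (κ * R n)) := by
      calc ((N : ℝ≥0∞) ^ n)⁻¹ = ε⁻¹ * (ε * ((N : ℝ≥0∞) ^ n)⁻¹) := by
            rw [← mul_assoc, ENNReal.inv_mul_cancel hε0.ne' hεtop, one_mul]
        _ ≤ ε⁻¹ * ENNReal.ofReal (h (κ * R n)) := mul_le_mul_right hA _
    refine hB.trans ?_
    rw [hΛdef, mul_assoc]
    refine mul_le_mul_right ?_ _
    calc ENNReal.ofReal (h (κ * R n)) ≤ ENNReal.ofReal (c ^ m * h (γ * R n)) :=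
        ENNReal.ofReal_le_ofReal hreal
      _ = ENNReal.ofReal (c ^ m) * ENNReal.ofReal (h (γ * R n)) :=
        ENNReal.ofReal_mul (by positivity)
  -- final assembly
  have hmain : ∀ cov : ℕ → Set (EuclideanSpace ℝ (Fin p)), (Set.range π ⊆ ⋃ i, cov i) →
      Λ⁻¹ ≤ ∑' i, packPre h (cov i) := by
    intro cov hcov
    have h1 : (1 : ℝ≥0∞) ≤ ∑' i, μ (cov i ∩ Set.range π) := by
      rw [← hμC]
      calc μ (Set.range π) ≤ μ (⋃ i, cov i ∩ Set.range π) := by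
            apply MeasureTheory.measure_mono
            intro x hx
            obtain ⟨i, hi⟩ := Set.mem_iUnion.1 (hcov hx)
            exact Set.mem_iUnion.2 ⟨i, hi, hx⟩
        _ ≤ ∑' i, μ (cov i ∩ Set.range π) := MeasureTheory.measure_iUnion_le _
    have h2 : ∀ i, μ (cov i ∩ Set.range π) ≤ Λ * packPre h (cov i) := by
      intro i
      calc μ (cov i ∩ Set.range π) ≤ Λ * packPre h (cov i ∩ Set.range π) :=
          measure_le_packPre μ h h0 Λ hΛ0 hΛtop _ (fun x hx => hdens x hx.2)
        _ ≤ Λ * packPre h (cov i) :=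
          mul_le_mul_right (packPre_mono h Set.inter_subset_left) _
    have h3 : (1 : ℝ≥0∞) ≤ Λ * ∑' i, packPre h (cov i) := by
      calc (1 : ℝ≥0∞) ≤ ∑' i, μ (cov i ∩ Set.range π) := h1
        _ ≤ ∑' i, Λ * packPre h (cov i) := ENNReal.tsum_le_tsum h2
        _ = Λ * ∑' i, packPre h (cov i) := ENNReal.tsum_mul_left
    calc Λ⁻¹ = Λ⁻¹ * 1 := (mul_one _).symm
      _ ≤ Λ⁻¹ * (Λ * ∑' i, packPre h (cov i)) := mul_le_mul_right h3 _
      _ = ∑' i, packPre h (cov i) := by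
          rw [← mul_assoc, ENNReal.inv_mul_cancel hΛ0 hΛtop, one_mul]
  have hfinal : Λ⁻¹ ≤ packMeasure h (Set.range π) :=
    le_iInf fun cov => le_iInf fun hcov => hmain cov hcov
  exact lt_of_lt_of_le (ENNReal.inv_pos.2 hΛtop) hfinal
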